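/- Let θ > 0 and let xₙ = (x₁, …, xₙ) be a sample of intervals in ℝ × [0,∞). For k ∈ {0, 1, …, n}, let 𝒴_k denote the set of samples of size n obtained from xₙ by replacing at most k of its points by arbitrary elements of ℝ × [0,∞). Then the finite sample breakdown point of the sample d_θ-median equals (1/n)·⌊(n+1)/2⌋; that is: (i) for every k < ⌊(n+1)/2⌋, sup over all y ∈ 𝒴_k and all sample d_θ-medians m(y) of y of d_θ(m(xₙ), m(y)) is finite (for any fixed choice of sample d_θ-median m(xₙ) of xₙ), and (ii) for k = ⌊(n+1)/2⌋ this supremum is infinite. -/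

import Mathlib

/-- The `d_θ` metric on intervals identified with pairs (mid, spr) ∈ ℝ × [0,∞). -/
noncomputable def dTheta (θ : ℝ) (p q : ℝ × ℝ) : ℝ :=
  Real.sqrt ((p.1 - q.1) ^ 2 + θ * (p.2 - q.2) ^ 2)

/-- `m` is a sample `d_θ`-median of the sample `x = (x₁,…,xₙ)` of intervals: it minimizes
`(y,z) ↦ (1/n) ∑ᵢ d_θ(xᵢ,(y,z))` over `ℝ × [0,∞)`. -/
def IsSampleDThetaMedian (θ : ℝ) {n : ℕ} (x : Fin n → ℝ × ℝ) (m : ℝ × ℝ) : Prop :=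
  0 ≤ m.2 ∧ ∀ p : ℝ × ℝ, 0 ≤ p.2 →
    (1 / (n : ℝ)) * ∑ i, dTheta θ (x i) m ≤ (1 / (n : ℝ)) * ∑ i, dTheta θ (x i) p

/-- `y ∈ 𝒴_k`: the sample `y` of intervals is obtained from `x` by replacing at most `k`
of its `n` points by arbitrary elements of `ℝ × [0,∞)`. -/
def IsContaminatedSample {n : ℕ} (k : ℕ) (x y : Fin n → ℝ × ℝ) : Prop :=
  (∀ i, 0 ≤ (y i).2) ∧ (Finset.univ.filter fun i => y i ≠ x i).card ≤ k

noncomputable def dthC (θ : ℝ) (p : ℝ × ℝ) : ℂ :=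
  (p.1 : ℂ) + (Real.sqrt θ * p.2 : ℝ) * Complex.I

lemma dTheta_eq_abs (θ : ℝ) (hθ : 0 ≤ θ) (p q : ℝ × ℝ) :
    dTheta θ p q = ‖dthC θ p - dthC θ q‖ := by
  unfold dTheta dthC
  rw [Complex.norm_def, Complex.normSq_apply]
  simp only [Complex.sub_re, Complex.sub_im, Complex.add_re, Complex.add_im,
    Complex.ofReal_re, Complex.ofReal_im, Complex.mul_re, Complex.mul_im,
    Complex.I_re, Complex.I_im]
  congr 1
  have h := Real.sq_sqrt hθ
  ring_nf
  linear_combination (-(p.2 - q.2) ^ 2) * h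

lemma dTheta_nonneg (θ : ℝ) (p q : ℝ × ℝ) : 0 ≤ dTheta θ p q := Real.sqrt_nonneg _

lemma dTheta_self (θ : ℝ) (p : ℝ × ℝ) : dTheta θ p p = 0 := by
  simp [dTheta]

lemma dTheta_comm (θ : ℝ) (hθ : 0 ≤ θ) (p q : ℝ × ℝ) : dTheta θ p q = dTheta θ q p := by
  rw [dTheta_eq_abs θ hθ, dTheta_eq_abs θ hθ, norm_sub_rev]

lemma dTheta_triangle (θ : ℝ) (hθ : 0 ≤ θ) (p q r : ℝ × ℝ) :
    dTheta θ p r ≤ dTheta θ p q + dTheta θ q r := by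
  rw [dTheta_eq_abs θ hθ, dTheta_eq_abs θ hθ, dTheta_eq_abs θ hθ]
  exact norm_sub_le_norm_sub_add_norm_sub _ _ _

lemma abs_mid_le_dTheta (θ : ℝ) (hθ : 0 ≤ θ) (p q : ℝ × ℝ) :
    |p.1 - q.1| ≤ dTheta θ p q := by
  rw [← Real.sqrt_sq_eq_abs]
  exact Real.sqrt_le_sqrt (by nlinarith [sq_nonneg (p.2 - q.2)])

lemma card_filter_val_lt (n k : ℕ) (hk : k ≤ n) :
    (Finset.univ.filter fun i : Fin n => (i : ℕ) < k).card = k := by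
  rw [← Finset.card_range k]
  apply Finset.card_nbij (i := fun i : Fin n => (i : ℕ))
  · intro a ha
    simp only [Finset.coe_filter, Finset.mem_filter, Set.mem_setOf_eq] at ha
    simpa using ha.2
  · intro a _ b _ h
    exact Fin.val_injective h
  · intro b hb
    simp only [Finset.coe_range, Set.mem_Iio] at hb
    exact ⟨⟨b, lt_of_lt_of_le hb hk⟩, by simp [hb], rfl⟩

/-- The finite sample breakdown point of the sample `d_θ`-median at any sample `xₙ` of
intervals equals `(1/n)·⌊(n+1)/2⌋`: (i) replacing fewer than `⌊(n+1)/2⌋` points keeps all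
sample `d_θ`-medians of the contaminated samples within a bounded `d_θ`-distance of the
sample `d_θ`-median of `xₙ`, while (ii) replacing `⌊(n+1)/2⌋` points allows the sample
`d_θ`-median to break down (the supremum of these distances is infinite). -/
theorem sample_dTheta_median_fsbp
    (θ : ℝ) (hθ : 0 < θ) (n : ℕ) (hn : 0 < n)
    (x : Fin n → ℝ × ℝ) (hx : ∀ i, 0 ≤ (x i).2)
    (m₀ : ℝ × ℝ) (hm₀ : IsSampleDThetaMedian θ x m₀) :
    (∀ k : ℕ, k < (n + 1) / 2 →
      ∃ C : ℝ, ∀ y : Fin n → ℝ × ℝ, IsContaminatedSample k x y →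
        ∀ m : ℝ × ℝ, IsSampleDThetaMedian θ y m → dTheta θ m₀ m ≤ C) ∧
    (∀ C : ℝ, ∃ y : Fin n → ℝ × ℝ, IsContaminatedSample ((n + 1) / 2) x y ∧
      ∃ m : ℝ × ℝ, IsSampleDThetaMedian θ y m ∧ C < dTheta θ m₀ m) := by
  have hθ' : (0:ℝ) ≤ θ := hθ.le
  constructor
  · -- part (i)
    intro k hk
    have hkn : 2 * k + 1 ≤ n := by omega
    set a := x ⟨0, hn⟩ with ha
    set R := ∑ i, dTheta θ (x i) a with hR
    have hR0 : 0 ≤ R := Finset.sum_nonneg fun i _ => dTheta_nonneg θ _ _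
    refine ⟨dTheta θ m₀ a + 2 * R, ?_⟩
    intro y hy m hm
    set D := dTheta θ a m with hD
    have hD0 : 0 ≤ D := dTheta_nonneg θ _ _
    have hmed : ∑ i, dTheta θ (y i) m ≤ ∑ i, dTheta θ (y i) a := by
      have h1 := hm.2 a (hx ⟨0, hn⟩)
      have hn' : (0:ℝ) < 1 / n := by positivity
      exact le_of_mul_le_mul_left h1 hn'
    have hterm : ∀ i, dTheta θ (y i) a - dTheta θ (y i) m ≤
        2 * dTheta θ (x i) a - D + (if y i = x i then 0 else 2 * D) := by
      intro i
      by_cases h : y i = x i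
      · rw [if_pos h, h]
        have t1 : dTheta θ a m ≤ dTheta θ a (x i) + dTheta θ (x i) m :=
          dTheta_triangle θ hθ' a (x i) m
        have t2 : dTheta θ a (x i) = dTheta θ (x i) a := dTheta_comm θ hθ' _ _
        linarith
      · rw [if_neg h]
        have t1 : dTheta θ (y i) a ≤ dTheta θ (y i) m + dTheta θ m a :=
          dTheta_triangle θ hθ' _ _ _
        have t2 : dTheta θ m a = D := dTheta_comm θ hθ' m a
        have t3 : 0 ≤ dTheta θ (x i) a := dTheta_nonneg θ _ _
        linarith
    have h2 : (0:ℝ) ≤ ∑ i, (dTheta θ (y i) a - dTheta θ (y i) m) := by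
      rw [Finset.sum_sub_distrib]
      linarith
    have h3 : ∑ i, (dTheta θ (y i) a - dTheta θ (y i) m) ≤
        ∑ i, (2 * dTheta θ (x i) a - D + (if y i = x i then 0 else 2 * D)) :=
      Finset.sum_le_sum fun i _ => hterm i
    have h4 : ∑ i, (2 * dTheta θ (x i) a - D + (if y i = x i then 0 else 2 * D)) =
        2 * R - (n : ℝ) * D +
          ((Finset.univ.filter fun i => y i ≠ x i).card : ℝ) * (2 * D) := by
      rw [Finset.sum_add_distrib, Finset.sum_sub_distrib, ← Finset.mul_sum,
        Finset.sum_const, Finset.card_univ, Fintype.card_fin]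
      have e : ∑ i, (if y i = x i then (0:ℝ) else 2 * D) =
          ∑ i ∈ Finset.univ.filter fun i => y i ≠ x i, (2 * D) := by
        rw [Finset.sum_filter]
        apply Finset.sum_congr rfl
        intro i _
        by_cases h : y i = x i <;> simp [h]
      rw [e, Finset.sum_const, nsmul_eq_mul, ← hR]
      push_cast
      ring
    have hcard : ((Finset.univ.filter fun i => y i ≠ x i).card : ℝ) ≤ (k : ℝ) :=
      Nat.cast_le.mpr hy.2
    have hnk' : (2 * k + 1 : ℝ) ≤ (n : ℝ) := by exact_mod_cast hkn
    have hDle : D ≤ 2 * R := by nlinarith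
    have tri : dTheta θ m₀ m ≤ dTheta θ m₀ a + dTheta θ a m :=
      dTheta_triangle θ hθ' m₀ a m
    linarith
  · -- part (ii)
    intro C
    set k := (n + 1) / 2 with hkdef
    have hkn : k ≤ n := by omega
    have hnk : n - k ≤ k := by omega
    set c := m₀.1 + |C| + 1 with hc
    set mc : ℝ × ℝ := (c, 0) with hmc
    set y : Fin n → ℝ × ℝ := fun i => if (i : ℕ) < k then mc else x i with hy
    set A : Finset (Fin n) := Finset.univ.filter fun i : Fin n => (i : ℕ) < k with hA
    have hcardA : A.card = k := card_filter_val_lt n k hkn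
    have hcardAc : (Finset.univ.filter fun i : Fin n => ¬ ((i : ℕ) < k)).card = n - k := by
      have := Finset.card_filter_add_card_filter_not
        (s := (Finset.univ : Finset (Fin n))) (p := fun i : Fin n => (i : ℕ) < k)
      rw [Finset.card_univ, Fintype.card_fin] at this
      rw [← hA] at this
      omega
    refine ⟨y, ⟨?_, ?_⟩, mc, ⟨le_refl 0, ?_⟩, ?_⟩
    · intro i
      by_cases h : (i : ℕ) < k <;> simp [hy, h, hx i, hmc]
    · apply le_trans (Finset.card_le_card ?_) (le_of_eq hcardA)
      intro i hi
      simp only [Finset.mem_filter, Finset.mem_univ, true_and] at hi ⊢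
      by_contra h
      have hik : ¬ ((i : ℕ) < k) := by simpa [hA] using h
      exact hi (by simp [hy, hik])
    · -- median property of mc
      intro p hp
      have key : ∑ i, dTheta θ (y i) mc ≤ ∑ i, dTheta θ (y i) p := by
        rw [← Finset.sum_filter_add_sum_filter_not Finset.univ
          (fun i : Fin n => (i : ℕ) < k) (fun i => dTheta θ (y i) mc),
          ← Finset.sum_filter_add_sum_filter_not Finset.univ
          (fun i : Fin n => (i : ℕ) < k) (fun i => dTheta θ (y i) p)]
        have e1 : ∑ i ∈ A, dTheta θ (y i) mc = 0 := by
          apply Finset.sum_eq_zero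
          intro i hi
          simp only [hA, Finset.mem_filter] at hi
          simp [hy, hi.2, dTheta_self]
        have e2 : ∑ i ∈ A, dTheta θ (y i) p = (k : ℝ) * dTheta θ mc p := by
          have hconst : ∀ i ∈ A, dTheta θ (y i) p = dTheta θ mc p := by
            intro i hi
            simp only [hA, Finset.mem_filter] at hi
            simp [hy, hi.2]
          rw [Finset.sum_congr rfl hconst, Finset.sum_const, hcardA, nsmul_eq_mul]
        have e3 : ∑ i ∈ Finset.univ.filter (fun i : Fin n => ¬ ((i : ℕ) < k)),
            dTheta θ (y i) mc ≤
            (∑ i ∈ Finset.univ.filter (fun i : Fin n => ¬ ((i : ℕ) < k)),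
              dTheta θ (y i) p) + ((n - k : ℕ) : ℝ) * dTheta θ p mc := by
          have := Finset.sum_le_sum (s := Finset.univ.filter
              (fun i : Fin n => ¬ ((i : ℕ) < k)))
            (f := fun i => dTheta θ (y i) mc)
            (g := fun i => dTheta θ (y i) p + dTheta θ p mc)
            (fun i _ => dTheta_triangle θ hθ' (y i) p mc)
          rw [Finset.sum_add_distrib, Finset.sum_const, hcardAc, nsmul_eq_mul] at this
          exact this
        have hcomm : dTheta θ p mc = dTheta θ mc p := dTheta_comm θ hθ' p mc
        have hdp0 : 0 ≤ dTheta θ mc p := dTheta_nonneg θ _ _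
        have hnkR : ((n - k : ℕ) : ℝ) ≤ (k : ℝ) := Nat.cast_le.mpr hnk
        rw [e1, e2]
        rw [hcomm] at e3
        nlinarith
      have hn' : (0:ℝ) ≤ 1 / n := by positivity
      exact mul_le_mul_of_nonneg_left key hn'
    · -- C < dTheta θ m₀ mc
      have h1 : |m₀.1 - mc.1| ≤ dTheta θ m₀ mc := abs_mid_le_dTheta θ hθ' m₀ mc
      have h2 : m₀.1 - mc.1 = -(|C| + 1) := by simp [hmc, hc]; ring
      rw [h2, abs_neg, abs_of_nonneg (by positivity)] at h1
      have := le_abs_self C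
      linarith
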